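/- Let P be a simple polytope with facet F, and let K be the boundary simplicial complex of the dual simplicial polytope P*. Then the boundary complex of the polytopal wedge wed_F(P) equals the simplicial wedge of K at the vertex corresponding to F. -/

import Mathlib

variable {V : Type*}

/-- An (abstract) simplicial complex on the vertex set `V`: a collection of finite
subsets of `V` closed under taking subsets. -/
def IsComplex (K : Set (Finset V)) : Prop :=
  ∀ σ ∈ K, ∀ τ ⊆ σ, τ ∈ K

/-- The link of a vertex `v` in `K`. -/
def linkOf [DecidableEq V] (K : Set (Finset V)) (v : V) : Set (Finset V) :=
  {σ | v ∉ σ ∧ insert v σ ∈ K}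

/-- The deletion `K \ {v}`: the induced subcomplex on the vertices other than `v`. -/
def delOf (K : Set (Finset V)) (v : V) : Set (Finset V) :=
  {σ | σ ∈ K ∧ v ∉ σ}

/-- The simplicial wedge `wed_v(K) = (I ⋆ link_K{v}) ∪ (∂I ⋆ (K \ {v}))` of `K` at the
vertex `v`.  Its vertex set is `V ⊕ Unit`, where `v₁ = Sum.inl v` and `v₂ = Sum.inr ()`
are the two vertices of the edge `I`. -/
def wedgeAt [DecidableEq V] (K : Set (Finset V)) (v : V) : Set (Finset (V ⊕ Unit)) :=
  {τ | ∃ (s : Finset (V ⊕ Unit)) (σ : Finset V),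
    s ⊆ {Sum.inl v, Sum.inr ()} ∧ τ = s ∪ σ.image Sum.inl ∧
    (σ ∈ linkOf K v ∨ (s ≠ {Sum.inl v, Sum.inr ()} ∧ σ ∈ delOf K v))}

/-- Let `P = {x | ∀ i, f i x ≤ b i}` be a simple `n`-polytope with facets
`F i = P ∩ {f i = b i}`, and let `K` be the boundary complex of the dual simplicial
polytope `P*`, i.e. the complex on the facet-index set whose faces are the sets of
facets with nonempty common intersection.  Let `Q ⊆ ℝⁿ × ℝ` be the polytopal wedge of
`P` at the facet `F i₀`, obtained by cutting `P × [0,∞)` with the hyperplane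
`f i₀ x + c t = b i₀` (with `c > 0`, so `H ∩ (P × {0}) = F i₀ × {0}` and `H` meets
the interior of `P × [0,∞)`).  Its facets are indexed by `ι ⊕ Unit`: for `i ≠ i₀` the
facet over `F i`, for `i₀` the slanted facet cut by `H`, and the extra index the bottom
facet `P × {0}`.  Then the boundary complex of `wed_{F i₀}(P)` is exactly the simplicial
wedge of `K` at the vertex `i₀`. -/
theorem boundaryComplex_polytopalWedge_eq_simplicialWedge
    {n : ℕ} {ι : Type*} [Fintype ι] [DecidableEq ι]
    (f : ι → (EuclideanSpace ℝ (Fin n) →ₗ[ℝ] ℝ)) (b : ι → ℝ)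
    (P : Set (EuclideanSpace ℝ (Fin n)))
    (hP : P = {x | ∀ i, f i x ≤ b i})
    (hPcompact : IsCompact P) (hPint : (interior P).Nonempty)
    (F : ι → Set (EuclideanSpace ℝ (Fin n)))
    (hF : ∀ i, F i = {x ∈ P | f i x = b i})
    (hFne : ∀ i, (F i).Nonempty)
    (hsimple : ∀ x ∈ P, {i | f i x = b i}.ncard ≤ n)
    (K : Set (Finset ι))
    (hK : K = {σ : Finset ι | (P ∩ ⋂ i ∈ σ, F i).Nonempty})
    (i₀ : ι) (c : ℝ) (hc : 0 < c)
    (Q : Set (EuclideanSpace ℝ (Fin n) × ℝ))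
    (hQ : Q = {p | p.1 ∈ P ∧ 0 ≤ p.2 ∧ f i₀ p.1 + c * p.2 ≤ b i₀})
    (G : ι ⊕ Unit → Set (EuclideanSpace ℝ (Fin n) × ℝ))
    (hG : G = Sum.elim
      (fun i => if i = i₀ then {p ∈ Q | f i₀ p.1 + c * p.2 = b i₀}
                else {p ∈ Q | f i p.1 = b i})
      (fun _ => {p ∈ Q | p.2 = 0})) :
    ∀ σ : Finset (ι ⊕ Unit), σ ∈ wedgeAt K i₀ ↔ (Q ∩ ⋂ w ∈ σ, G w).Nonempty := by
  intro σ
  have hQmem : ∀ x t, (x, t) ∈ Q ↔ x ∈ P ∧ 0 ≤ t ∧ f i₀ x + c * t ≤ b i₀ := by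
    intro x t; rw [hQ]; rfl
  have hPle : ∀ x ∈ P, ∀ i, f i x ≤ b i := by
    intro x hx i; rw [hP] at hx; exact hx i
  have hFmem : ∀ x i, x ∈ F i ↔ x ∈ P ∧ f i x = b i := by
    intro x i; rw [hF i]; rfl
  have hKmem : ∀ A : Finset ι, A ∈ K ↔ ∃ x ∈ P, ∀ i ∈ A, f i x = b i := by
    intro A; rw [hK]
    constructor
    · rintro ⟨x, hxP, hxF⟩
      exact ⟨x, hxP, fun i hi => ((hFmem x i).1 (Set.mem_iInter₂.1 hxF i hi)).2⟩
    · rintro ⟨x, hxP, hx⟩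
      exact ⟨x, hxP, Set.mem_iInter₂.2 fun i hi => (hFmem x i).2 ⟨hxP, hx i hi⟩⟩
  have hGi0 : ∀ p : EuclideanSpace ℝ (Fin n) × ℝ,
      p ∈ G (Sum.inl i₀) ↔ p ∈ Q ∧ f i₀ p.1 + c * p.2 = b i₀ := by
    intro p; rw [hG]; simp
  have hGi : ∀ (p : EuclideanSpace ℝ (Fin n) × ℝ) i, i ≠ i₀ →
      (p ∈ G (Sum.inl i) ↔ p ∈ Q ∧ f i p.1 = b i) := by
    intro p i h; rw [hG]; simp [h]
  have hGr : ∀ p : EuclideanSpace ℝ (Fin n) × ℝ,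
      p ∈ G (Sum.inr ()) ↔ p ∈ Q ∧ p.2 = 0 := by
    intro p; rw [hG]; simp
  have hIσ : ∀ p : EuclideanSpace ℝ (Fin n) × ℝ,
      p ∈ Q ∩ ⋂ w ∈ σ, G w ↔ p ∈ Q ∧ ∀ w ∈ σ, p ∈ G w := by
    intro p; simp [Set.mem_iInter]
  constructor
  · rintro ⟨s, σ', hs, hτ, hcond⟩
    have hmem : ∀ w, w ∈ σ ↔ w ∈ s ∨ ∃ i ∈ σ', w = Sum.inl i := by
      intro w; rw [hτ]; simp only [Finset.mem_union, Finset.mem_image]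
      constructor
      · rintro (h | ⟨i, hi, rfl⟩)
        · exact Or.inl h
        · exact Or.inr ⟨i, hi, rfl⟩
      · rintro (h | ⟨i, hi, rfl⟩)
        · exact Or.inl h
        · exact Or.inr ⟨i, hi, rfl⟩
    rcases hcond with ⟨hv, hAK⟩ | ⟨hsne, hσ'K, hv⟩
    · -- link case: take t = 0
      obtain ⟨x, hxP, hxf⟩ := (hKmem _).1 hAK
      have hx0 : f i₀ x = b i₀ := hxf i₀ (Finset.mem_insert_self _ _)
      have hQ0 : ((x, 0) : EuclideanSpace ℝ (Fin n) × ℝ) ∈ Q :=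
        (hQmem x 0).2 ⟨hxP, le_refl 0, by rw [mul_zero, add_zero, hx0]⟩
      refine ⟨(x, 0), (hIσ _).2 ⟨hQ0, ?_⟩⟩
      intro w hw
      rcases (hmem w).1 hw with hws | ⟨i, hi, rfl⟩
      · have := hs hws
        rcases Finset.mem_insert.1 this with rfl | h
        · exact (hGi0 _).2 ⟨hQ0, by simpa using hx0⟩
        · rw [Finset.mem_singleton.1 h]; exact (hGr _).2 ⟨hQ0, rfl⟩
      · have hne : i ≠ i₀ := fun h => hv (h ▸ hi)
        exact (hGi _ i hne).2 ⟨hQ0, hxf i (Finset.mem_insert_of_mem hi)⟩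
    · -- deletion case
      obtain ⟨x, hxP, hxf⟩ := (hKmem _).1 hσ'K
      by_cases hr : Sum.inr () ∈ σ
      · -- bottom vertex present; then inl i₀ ∉ σ, take t = 0
        have hrs : Sum.inr () ∈ s := by
          rcases (hmem _).1 hr with h | ⟨i, _, h⟩
          · exact h
          · exact absurd h (by simp)
        have hli : Sum.inl i₀ ∉ s := by
          intro h
          apply hsne
          refine Finset.Subset.antisymm hs ?_
          intro w hw
          rcases Finset.mem_insert.1 hw with rfl | hw'
          · exact h
          · rw [Finset.mem_singleton.1 hw']; exact hrs
        have hQ0 : ((x, 0) : EuclideanSpace ℝ (Fin n) × ℝ) ∈ Q :=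
          (hQmem x 0).2 ⟨hxP, le_refl 0, by rw [mul_zero, add_zero]; exact hPle x hxP i₀⟩
        refine ⟨(x, 0), (hIσ _).2 ⟨hQ0, ?_⟩⟩
        intro w hw
        rcases (hmem w).1 hw with hws | ⟨i, hi, rfl⟩
        · rcases Finset.mem_insert.1 (hs hws) with rfl | h
          · exact absurd hws hli
          · rw [Finset.mem_singleton.1 h]; exact (hGr _).2 ⟨hQ0, rfl⟩
        · have hne : i ≠ i₀ := fun h => hv (h ▸ hi)
          exact (hGi _ i hne).2 ⟨hQ0, hxf i hi⟩
      · -- bottom vertex absent; take t = (b i₀ - f i₀ x)/c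
        set t : ℝ := (b i₀ - f i₀ x) / c with ht
        have ht0 : 0 ≤ t := div_nonneg (by linarith [hPle x hxP i₀]) hc.le
        have heq : f i₀ x + c * t = b i₀ := by
          rw [ht]; field_simp; ring
        have hQt : ((x, t) : EuclideanSpace ℝ (Fin n) × ℝ) ∈ Q :=
          (hQmem x t).2 ⟨hxP, ht0, le_of_eq heq⟩
        refine ⟨(x, t), (hIσ _).2 ⟨hQt, ?_⟩⟩
        intro w hw
        rcases (hmem w).1 hw with hws | ⟨i, hi, rfl⟩
        · rcases Finset.mem_insert.1 (hs hws) with rfl | h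
          · exact (hGi0 _).2 ⟨hQt, heq⟩
          · rw [Finset.mem_singleton.1 h] at hws
            exact absurd ((hmem _).2 (Or.inl hws)) hr
        · have hne : i ≠ i₀ := fun h => hv (h ▸ hi)
          exact (hGi _ i hne).2 ⟨hQt, hxf i hi⟩
  · rintro ⟨⟨x, t⟩, hp⟩
    obtain ⟨hpQ, hpG⟩ := (hIσ _).1 hp
    obtain ⟨hxP, htt, hle⟩ := (hQmem x t).1 hpQ
    set A : Finset ι := σ.preimage Sum.inl (Sum.inl_injective.injOn) with hAdef
    have hA : ∀ i, i ∈ A ↔ Sum.inl i ∈ σ := fun i => Finset.mem_preimage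
    have hdecomp : ∀ w ∈ σ, w = Sum.inr () ∨ ∃ i ∈ A, w = Sum.inl i := by
      intro w hw
      cases w with
      | inl i => exact Or.inr ⟨i, (hA i).2 hw, rfl⟩
      | inr u => left; cases u; rfl
    have hσeq : ∀ (s : Finset (ι ⊕ Unit)) (σ' : Finset ι),
        (∀ w, w ∈ σ ↔ w ∈ s ∨ ∃ i ∈ σ', w = Sum.inl i) → σ = s ∪ σ'.image Sum.inl := by
      intro s σ' h
      ext w
      rw [Finset.mem_union, Finset.mem_image, h w]
      constructor
      · rintro (h' | ⟨i, hi, rfl⟩)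
        · exact Or.inl h'
        · exact Or.inr ⟨i, hi, rfl⟩
      · rintro (h' | ⟨i, hi, rfl⟩)
        · exact Or.inl h'
        · exact Or.inr ⟨i, hi, rfl⟩
    have hfi : ∀ i ∈ A, i ≠ i₀ → f i x = b i :=
      fun i hi hne => ((hGi _ i hne).1 (hpG _ ((hA i).1 hi))).2
    have hfi0 : Sum.inl i₀ ∈ σ → f i₀ x + c * t = b i₀ :=
      fun h => ((hGi0 _).1 (hpG _ h)).2
    have ht0 : Sum.inr () ∈ σ → t = 0 := fun h => ((hGr _).1 (hpG _ h)).2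
    by_cases hr : Sum.inr () ∈ σ
    · have ht' : t = 0 := ht0 hr
      have hAK : A ∈ K := by
        refine (hKmem A).2 ⟨x, hxP, fun i hi => ?_⟩
        by_cases hii : i = i₀
        · subst hii
          have := hfi0 ((hA i).1 hi)
          rw [ht'] at this; simpa using this
        · exact hfi i hi hii
      by_cases hl : Sum.inl i₀ ∈ σ
      · refine ⟨{Sum.inl i₀, Sum.inr ()}, A.erase i₀, subset_rfl, ?_,
          Or.inl ⟨Finset.notMem_erase _ _, ?_⟩⟩
        · refine hσeq _ _ fun w => ?_
          constructor
          · intro hw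
            rcases hdecomp w hw with rfl | ⟨i, hi, rfl⟩
            · exact Or.inl (by simp)
            · by_cases hii : i = i₀
              · subst hii; exact Or.inl (by simp)
              · exact Or.inr ⟨i, Finset.mem_erase.2 ⟨hii, hi⟩, rfl⟩
          · rintro (hw | ⟨i, hi, rfl⟩)
            · rcases Finset.mem_insert.1 hw with rfl | hw'
              · exact hl
              · rw [Finset.mem_singleton.1 hw']; exact hr
            · exact (hA i).1 (Finset.mem_of_mem_erase hi)
        · show insert i₀ (A.erase i₀) ∈ K
          rw [Finset.insert_erase ((hA i₀).2 hl)]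
          exact hAK
      · refine ⟨{Sum.inr ()}, A, ?_, ?_, Or.inr ⟨?_, hAK, fun h => hl ((hA i₀).1 h)⟩⟩
        · intro w hw; rw [Finset.mem_singleton.1 hw]; simp
        · refine hσeq _ _ fun w => ?_
          constructor
          · intro hw
            rcases hdecomp w hw with rfl | ⟨i, hi, rfl⟩
            · exact Or.inl (by simp)
            · exact Or.inr ⟨i, hi, rfl⟩
          · rintro (hw | ⟨i, hi, rfl⟩)
            · rw [Finset.mem_singleton.1 hw]; exact hr
            · exact (hA i).1 hi
        · intro h
          have : Sum.inl i₀ ∈ ({Sum.inr ()} : Finset (ι ⊕ Unit)) :=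
            h ▸ Finset.mem_insert_self _ _
          simp at this
    · have hBK : A.erase i₀ ∈ K :=
        (hKmem _).2 ⟨x, hxP, fun i hi =>
          hfi i (Finset.mem_of_mem_erase hi) (Finset.ne_of_mem_erase hi)⟩
      by_cases hl : Sum.inl i₀ ∈ σ
      · refine ⟨{Sum.inl i₀}, A.erase i₀, ?_, ?_,
          Or.inr ⟨?_, hBK, Finset.notMem_erase _ _⟩⟩
        · intro w hw; rw [Finset.mem_singleton.1 hw]; simp
        · refine hσeq _ _ fun w => ?_
          constructor
          · intro hw
            rcases hdecomp w hw with rfl | ⟨i, hi, rfl⟩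
            · exact absurd hw hr
            · by_cases hii : i = i₀
              · subst hii; exact Or.inl (by simp)
              · exact Or.inr ⟨i, Finset.mem_erase.2 ⟨hii, hi⟩, rfl⟩
          · rintro (hw | ⟨i, hi, rfl⟩)
            · rw [Finset.mem_singleton.1 hw]; exact hl
            · exact (hA i).1 (Finset.mem_of_mem_erase hi)
        · intro h
          have : Sum.inr () ∈ ({Sum.inl i₀} : Finset (ι ⊕ Unit)) := by
            rw [h]; simp
          simp at this
      · have hi₀A : i₀ ∉ A := fun h => hl ((hA i₀).1 h)
        have hAe : A.erase i₀ = A := Finset.erase_eq_of_notMem hi₀A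
        refine ⟨∅, A, by simp, ?_, Or.inr ⟨?_, hAe ▸ hBK, hi₀A⟩⟩
        · refine hσeq _ _ fun w => ?_
          constructor
          · intro hw
            rcases hdecomp w hw with rfl | ⟨i, hi, rfl⟩
            · exact absurd hw hr
            · exact Or.inr ⟨i, hi, rfl⟩
          · rintro (hw | ⟨i, hi, rfl⟩)
            · exact absurd hw (Finset.notMem_empty w)
            · exact (hA i).1 hi
        · intro h
          have : Sum.inr () ∈ (∅ : Finset (ι ⊕ Unit)) := by rw [h]; simp
          simp at this
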